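/- Let G be a graph, let 𝒯 = (T, {X_t}) be a tree decomposition of G, and let W be a nonempty subset of V(G). Then W can be covered by at most 2·α(W) − 1 bags of 𝒯, i.e., there is a set ℬ of at most 2·α(W) − 1 nodes of T such that every vertex of W lies in X_t for some t ∈ ℬ. -/

import Mathlib

open SimpleGraph

/-- A set of vertices is independent if no two of its members are adjacent. -/
def SimpleGraph.IsIndep {V : Type} (G : SimpleGraph V) (s : Set V) : Prop :=
  s.Pairwise fun u v => ¬ G.Adj u v

/-- The independence number of the subgraph of `G` induced by `W`:
the largest size of a finite independent set contained in `W`. -/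
noncomputable def alphaOn {V : Type} (G : SimpleGraph V) (W : Set V) : ℕ :=
  sSup {n | ∃ S : Finset V, ↑S ⊆ W ∧ G.IsIndep ↑S ∧ S.card = n}

/-- A tree decomposition of `G` with decomposition tree `tree`. -/
structure TreeDecomp {V T : Type} (G : SimpleGraph V) (tree : SimpleGraph T) : Type where
  bag : T → Set V
  isTree : tree.IsTree
  mem_bag : ∀ v : V, ∃ t, v ∈ bag t
  edge_bag : ∀ ⦃u v : V⦄, G.Adj u v → ∃ t, u ∈ bag t ∧ v ∈ bag t
  conn : ∀ v : V, (tree.induce {t | v ∈ bag t}).Connected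

/-- `tree-α(G) ≤ k`: some tree decomposition of `G` has all bags of independence number `≤ k`. -/
def TreeAlphaLE {V : Type} (G : SimpleGraph V) (k : ℕ) : Prop :=
  ∃ (T : Type) (tree : SimpleGraph T) (td : TreeDecomp G tree),
    ∀ t : T, alphaOn G (td.bag t) ≤ k

variable {T : Type} {tree : SimpleGraph T}

/-- Reachability avoiding a vertex `t`. -/
def AvoidReach (tree : SimpleGraph T) (t a b : T) : Prop :=
  ∃ p : tree.Walk a b, t ∉ p.support

lemma AvoidReach.ne_left {t a b : T} (h : AvoidReach tree t a b) : a ≠ t := by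
  obtain ⟨p, hp⟩ := h; rintro rfl; exact hp p.start_mem_support

lemma AvoidReach.ne_right {t a b : T} (h : AvoidReach tree t a b) : b ≠ t := by
  obtain ⟨p, hp⟩ := h; rintro rfl; exact hp p.end_mem_support

lemma AvoidReach.symm {t a b : T} (h : AvoidReach tree t a b) : AvoidReach tree t b a := by
  obtain ⟨p, hp⟩ := h
  exact ⟨p.reverse, by simpa [Walk.support_reverse] using hp⟩

lemma AvoidReach.trans {t a b c : T} (h : AvoidReach tree t a b)
    (h' : AvoidReach tree t b c) : AvoidReach tree t a c := by
  obtain ⟨p, hp⟩ := h; obtain ⟨q, hq⟩ := h'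
  refine ⟨p.append q, fun hm => ?_⟩
  rcases (Walk.mem_support_append_iff _ _).mp hm with h | h
  exacts [hp h, hq h]

lemma AvoidReach.refl {t a : T} (h : a ≠ t) : AvoidReach tree t a a :=
  ⟨Walk.nil, by simpa using h.symm⟩

/-- Two nodes whose bags share a vertex `v` not in bag `t` are connected avoiding `t`. -/
lemma bag_avoidReach {V : Type} {G : SimpleGraph V} (td : TreeDecomp G tree)
    {v : V} {a b t : T} (ha : v ∈ td.bag a) (hb : v ∈ td.bag b) (ht : v ∉ td.bag t) :
    AvoidReach tree t a b := by
  obtain ⟨p⟩ := (td.conn v).preconnected ⟨a, ha⟩ ⟨b, hb⟩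
  refine ⟨p.map (SimpleGraph.Embedding.induce {s | v ∈ td.bag s}).toHom, fun hm => ?_⟩
  replace hm : t ∈ (p.map (SimpleGraph.Embedding.induce {s | v ∈ td.bag s}).toHom).support := hm
  rw [Walk.support_map, List.mem_map] at hm
  obtain ⟨x, -, hx⟩ := hm
  exact ht (hx ▸ x.2)

/-- In a tree, no vertex can reach `t` avoiding `t'` and reach `t'` avoiding `t`
when `t t'` is an edge. -/
lemma bridge_contradiction (htr : tree.IsTree) {t t' s : T} (hadj : tree.Adj t t')
    (h1 : AvoidReach tree t' s t) (h2 : AvoidReach tree t s t') : False := by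
  classical
  obtain ⟨p1, hp1⟩ := h1
  obtain ⟨p2, hp2⟩ := h2
  have hbr : tree.IsBridge s(t, t') :=
    (isAcyclic_iff_forall_adj_isBridge.mp htr.2) hadj
  have hnr := isBridge_iff.mp hbr
  have he : s(t, t') ∉ (p1.reverse.append p2).edges := by
    intro hm
    rw [Walk.edges_append, List.mem_append, Walk.edges_reverse, List.mem_reverse] at hm
    rcases hm with hm | hm
    · exact hp1 (p1.snd_mem_support_of_mem_edges hm)
    · exact hp2 (p2.fst_mem_support_of_mem_edges hm)
  have hw := ((p1.reverse.append p2).toDeleteEdge s(t, t') he).reachable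
  rw [deleteEdges] at hw
  exact hnr hw

/-- A fixed choice of path between any two nodes of the tree. -/
noncomputable def pth (htr : tree.IsTree) (a b : T) : tree.Path a b :=
  letI := Classical.decEq T
  ((htr.isConnected.preconnected a b).some).toPath

lemma pth_unique (htr : tree.IsTree) {a b : T} (q : tree.Walk a b) (hq : q.IsPath) :
    (pth htr a b).1 = q :=
  congrArg Subtype.val (htr.2.path_unique (pth htr a b) ⟨q, hq⟩)

/-- Second vertex of a nontrivial path. -/
lemma path_second (htr : tree.IsTree) {a b : T} (hne : a ≠ b) :
    ∃ t', tree.Adj a t' ∧ t' ∈ (pth htr a b).1.support ∧ AvoidReach tree a t' b := by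
  obtain ⟨p, hp⟩ := pth htr a b
  cases p with
  | nil => exact absurd rfl hne
  | cons h q =>
    rw [Walk.cons_isPath_iff] at hp
    exact ⟨_, h, by simp, ⟨q, hp.2⟩⟩

section Alpha
variable {V : Type} [Finite V] (G : SimpleGraph V) {W : Set V}

lemma alphaOn_bddAbove (W : Set V) :
    BddAbove {n | ∃ S : Finset V, ↑S ⊆ W ∧ G.IsIndep ↑S ∧ S.card = n} := by
  have : Fintype V := Fintype.ofFinite V
  exact ⟨Fintype.card V, fun n ⟨S, _, _, hc⟩ => hc ▸ S.card_le_univ⟩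

lemma card_le_alphaOn {S : Finset V} (hS : ↑S ⊆ W) (hI : G.IsIndep ↑S) :
    S.card ≤ alphaOn G W :=
  le_csSup (alphaOn_bddAbove G W) ⟨S, hS, hI, rfl⟩

lemma one_le_alphaOn (hW : W.Nonempty) : 1 ≤ alphaOn G W := by
  obtain ⟨w, hw⟩ := hW
  have := card_le_alphaOn G (S := {w}) (by simpa using hw) (by simp [SimpleGraph.IsIndep])
  simpa using this

lemma exists_max_indep (W : Set V) :
    ∃ S : Finset V, ↑S ⊆ W ∧ G.IsIndep ↑S ∧ S.card = alphaOn G W := by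
  have h := Nat.sSup_mem (s := {n | ∃ S : Finset V, ↑S ⊆ W ∧ G.IsIndep ↑S ∧ S.card = n})
    ⟨0, ∅, by simp [SimpleGraph.IsIndep]⟩ (alphaOn_bddAbove G W)
  exact h

end Alpha

lemma pth_support_triangle {T : Type} {tree : SimpleGraph T} (htr : tree.IsTree)
    {t0 t b2 b : T} (ht : t ∈ (pth htr t0 b2).1.support) :
    ∀ x ∈ (pth htr t b).1.support,
      x ∈ (pth htr t0 b2).1.support ∨ x ∈ (pth htr t0 b).1.support := by
  classical
  intro x hx
  set q1 := (pth htr t0 b2).1.takeUntil t ht with hq1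
  have hq1p : q1.IsPath := (pth htr t0 b2).2.takeUntil ht
  set comp := (q1.reverse.append (pth htr t0 b).1).toPath with hcomp
  have heq : (pth htr t b).1 = comp.1 := pth_unique htr comp.1 comp.2
  rw [heq] at hx
  have hx' := (q1.reverse.append (pth htr t0 b).1).support_toPath_subset hx
  rcases (Walk.mem_support_append_iff _ _).mp hx' with h | h
  · rw [Walk.support_reverse, List.mem_reverse] at h
    exact Or.inl ((pth htr t0 b2).1.support_takeUntil_subset ht h)
  · exact Or.inr h
/-- a nonempty set `W` of vertices can be covered by at most `2·α(W) − 1` bags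
of any tree decomposition. -/
theorem stmt5 {V T : Type} [Finite V] (G : SimpleGraph V)
    (tree : SimpleGraph T) (td : TreeDecomp G tree)
    (W : Set V) (hW : W.Nonempty) :
    ∃ B : Finset T, B.card ≤ 2 * alphaOn G W - 1 ∧
      ∀ v ∈ W, ∃ t ∈ B, v ∈ td.bag t := by
  classical
  choose nd hnd using td.mem_bag
  suffices H : ∀ (m : ℕ) (W : Set V), W.ncard ≤ m → W.Nonempty →
      ∃ B : Finset T, B.card ≤ 2 * alphaOn G W - 1 ∧ ∀ v ∈ W, ∃ t ∈ B, v ∈ td.bag t by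
    exact H W.ncard W le_rfl hW
  clear hW W
  intro m
  induction m with
  | zero =>
    intro W hc hne
    rw [Nat.le_zero, Set.ncard_eq_zero W.toFinite] at hc
    exact absurd hc hne.ne_empty
  | succ m ih =>
    intro W hc hne
    have hα1 : 1 ≤ alphaOn G W := one_le_alphaOn G hne
    by_cases h0 : ∃ t, W ⊆ td.bag t
    · obtain ⟨t, ht⟩ := h0
      exact ⟨{t}, by simp; omega, fun v hv => ⟨t, by simp, ht hv⟩⟩
    by_cases hsplit : ∃ t, ∃ w1 ∈ W, ∃ w2 ∈ W, w1 ∉ td.bag t ∧ w2 ∉ td.bag t ∧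
        ¬ AvoidReach tree t (nd w1) (nd w2)
    · obtain ⟨t, w1, hw1W, w2, hw2W, hw1b, hw2b, hnar⟩ := hsplit
      set WA := {w ∈ W | w ∉ td.bag t ∧ AvoidReach tree t (nd w) (nd w1)} with hWA
      set WB := {w ∈ W | w ∉ td.bag t ∧ ¬ AvoidReach tree t (nd w) (nd w1)} with hWB
      have hndne : ∀ w : V, w ∉ td.bag t → nd w ≠ t := fun w hw h => hw (h ▸ hnd w)
      have hw1A : w1 ∈ WA := ⟨hw1W, hw1b, AvoidReach.refl (hndne w1 hw1b)⟩
      have hw2B : w2 ∈ WB := ⟨hw2W, hw2b, fun h => hnar h.symm⟩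
      have hnonadj : ∀ w ∈ WA, ∀ w' ∈ WB, ¬ G.Adj w w' := by
        rintro w ⟨hwW, hwb, hwr⟩ w' ⟨hw'W, hw'b, hw'r⟩ hadj
        obtain ⟨s, hws, hw's⟩ := td.edge_bag hadj
        have h1 : AvoidReach tree t (nd w) s := bag_avoidReach td (hnd w) hws hwb
        have h2 : AvoidReach tree t s (nd w') := bag_avoidReach td hw's (hnd w') hw'b
        exact hw'r ((h2.symm.trans h1.symm).trans hwr)
      obtain ⟨SA, hSAsub, hSAind, hSAcard⟩ := exists_max_indep G WA
      obtain ⟨SB, hSBsub, hSBind, hSBcard⟩ := exists_max_indep G WB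
      have hdisj : Disjoint SA SB := by
        rw [Finset.disjoint_left]
        intro a haA haB
        exact (hSBsub haB).2.2 (hSAsub haA).2.2
      have hindU : G.IsIndep ↑(SA ∪ SB) := by
        intro u hu v hv hne'
        rw [Finset.coe_union, Set.mem_union] at hu hv
        rcases hu with hu | hu <;> rcases hv with hv | hv
        · exact hSAind hu hv hne'
        · exact hnonadj u (hSAsub hu) v (hSBsub hv)
        · exact fun hadj => hnonadj v (hSAsub hv) u (hSBsub hu) hadj.symm
        · exact hSBind hu hv hne'
      have hsum : alphaOn G WA + alphaOn G WB ≤ alphaOn G W := by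
        have hsubW : ↑(SA ∪ SB) ⊆ W := by
          rw [Finset.coe_union]
          exact Set.union_subset (hSAsub.trans fun w hw => hw.1)
            (hSBsub.trans fun w hw => hw.1)
        have := card_le_alphaOn G hsubW hindU
        rwa [Finset.card_union_of_disjoint hdisj, hSAcard, hSBcard] at this
      have hAlt : WA.ncard ≤ m := by
        have hss : WA ⊂ W := ⟨fun w hw => hw.1, fun h => hw2B.2.2 (h hw2W).2.2⟩
        have := Set.ncard_lt_ncard hss W.toFinite
        omega
      have hBlt : WB.ncard ≤ m := by
        have hss : WB ⊂ W := ⟨fun w hw => hw.1, fun h => (h hw1W).2.2 hw1A.2.2⟩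
        have := Set.ncard_lt_ncard hss W.toFinite
        omega
      obtain ⟨BA, hBAc, hBAcov⟩ := ih WA hAlt ⟨w1, hw1A⟩
      obtain ⟨BB, hBBc, hBBcov⟩ := ih WB hBlt ⟨w2, hw2B⟩
      refine ⟨insert t (BA ∪ BB), ?_, ?_⟩
      · have h1A := one_le_alphaOn G (W := WA) ⟨w1, hw1A⟩
        have h1B := one_le_alphaOn G (W := WB) ⟨w2, hw2B⟩
        have hcd := (Finset.card_insert_le t (BA ∪ BB)).trans
          (Nat.succ_le_succ (Finset.card_union_le BA BB))
        omega
      · intro v hv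
        by_cases hvb : v ∈ td.bag t
        · exact ⟨t, Finset.mem_insert_self _ _, hvb⟩
        by_cases hvr : AvoidReach tree t (nd v) (nd w1)
        · obtain ⟨s, hs, hvs⟩ := hBAcov v ⟨hv, hvb, hvr⟩
          exact ⟨s, by simp [Finset.mem_insert, Finset.mem_union, hs], hvs⟩
        · obtain ⟨s, hs, hvs⟩ := hBBcov v ⟨hv, hvb, hvr⟩
          exact ⟨s, by simp [Finset.mem_insert, Finset.mem_union, hs], hvs⟩
    · push_neg at h0 hsplit
      have hall : ∀ t, ∃ w ∈ W, w ∉ td.bag t := fun t => Set.not_subset.mp (h0 t)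
      set htr := td.isTree with hhtr
      obtain ⟨wbase, hwbase⟩ := hne
      set t0 := nd wbase with ht0
      set F : Set T := ⋃ w ∈ W, {x | x ∈ (pth htr t0 (nd w)).1.support} with hF
      have hFfin : F.Finite :=
        Set.Finite.biUnion W.toFinite fun w _ => (pth htr t0 (nd w)).1.support.finite_toSet
      have hFmem : ∀ w ∈ W, ∀ x ∈ (pth htr t0 (nd w)).1.support, x ∈ F := by
        intro w hw x hx
        exact Set.mem_biUnion hw hx
      have ht0F : t0 ∈ F := hFmem wbase hwbase t0 (Walk.start_mem_support _)
      have hFcl : ∀ t ∈ F, ∀ w ∈ W, ∀ x ∈ (pth htr t (nd w)).1.support, x ∈ F := by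
        intro t htF w hwW x hx
        obtain ⟨w2, hw2W, ht2⟩ : ∃ w2 ∈ W, t ∈ (pth htr t0 (nd w2)).1.support := by
          simpa [hF] using htF
        rcases pth_support_triangle htr ht2 x hx with h | h
        · exact hFmem w2 hw2W x h
        · exact hFmem w hwW x h
      set CS : T → Set T :=
        fun t => {s | s ∈ F ∧ ∃ w ∈ W, w ∉ td.bag t ∧ AvoidReach tree t s (nd w)} with hCS
      have hCSsub : ∀ t, CS t ⊆ F := fun t s hs => hs.1
      set muu : T → ℕ := fun t => (CS t).ncard with hmuu
      obtain ⟨t, htF, htmin⟩ : ∃ t ∈ F, ∀ t' ∈ F, muu t ≤ muu t' := by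
        have hMne : (muu '' F).Nonempty := ⟨muu t0, Set.mem_image_of_mem muu ht0F⟩
        obtain ⟨t, htF, hteq⟩ := Nat.sInf_mem hMne
        exact ⟨t, htF, fun t' ht' => hteq ▸ Nat.sInf_le (Set.mem_image_of_mem muu ht')⟩
      obtain ⟨w0, hw0W, hw0b⟩ := hall t
      have htne : t ≠ nd w0 := fun h => hw0b (h ▸ hnd w0)
      obtain ⟨t', hadj, ht'sup, hARt'⟩ := path_second htr htne
      have ht'F : t' ∈ F := hFcl t htF w0 hw0W t' ht'sup
      obtain ⟨w1, hw1W, hw1b'⟩ := hall t'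
      by_cases hw1t : w1 ∈ td.bag t
      · -- two-bag case
        have hkey : ∀ w ∈ W, w ∉ td.bag t → w ∈ td.bag t' := by
          intro w hwW hwb
          by_contra hwb'
          have h1 : AvoidReach tree t (nd w) (nd w0) := hsplit t w hwW w0 hw0W hwb hw0b
          have h2 : AvoidReach tree t (nd w) t' := h1.trans hARt'.symm
          have h3 : AvoidReach tree t' (nd w) (nd w1) := hsplit t' w hwW w1 hw1W hwb' hw1b'
          have h4 : AvoidReach tree t' (nd w1) t := bag_avoidReach td (hnd w1) hw1t hw1b'
          exact bridge_contradiction htr hadj (h3.trans h4) h2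
        have hw0t' : w0 ∈ td.bag t' := hkey w0 hw0W hw0b
        have hne01 : w0 ≠ w1 := fun h => hw1b' (h ▸ hw0t')
        have hnadj : ¬ G.Adj w0 w1 := by
          intro hadj'
          obtain ⟨s, h0s, h1s⟩ := td.edge_bag hadj'
          have hA : AvoidReach tree t s (nd w0) := bag_avoidReach td h0s (hnd w0) hw0b
          have hB : AvoidReach tree t s t' := hA.trans hARt'.symm
          have hC : AvoidReach tree t' s t := bag_avoidReach td h1s hw1t hw1b'
          exact bridge_contradiction htr hadj hC hB
        have h2α : 2 ≤ alphaOn G W := by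
          have hind : G.IsIndep ↑({w0, w1} : Finset V) := by
            intro u hu v hv huv
            simp only [Finset.coe_insert, Finset.coe_singleton, Set.mem_insert_iff,
              Set.mem_singleton_iff] at hu hv
            rcases hu with rfl | rfl <;> rcases hv with rfl | rfl
            · exact absurd rfl huv
            · exact hnadj
            · exact fun h => hnadj h.symm
            · exact absurd rfl huv
          have hsub : ↑({w0, w1} : Finset V) ⊆ W := by
            intro x hx
            simp only [Finset.coe_insert, Finset.coe_singleton, Set.mem_insert_iff,
              Set.mem_singleton_iff] at hx
            rcases hx with rfl | rfl
            exacts [hw0W, hw1W]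
          have := card_le_alphaOn G hsub hind
          rwa [Finset.card_insert_of_notMem (by simpa using hne01),
            Finset.card_singleton] at this
        refine ⟨{t, t'}, ?_, ?_⟩
        · have hcd : ({t, t'} : Finset T).card ≤ 2 :=
            (Finset.card_insert_le _ _).trans (by simp)
          omega
        · intro v hv
          by_cases hvb : v ∈ td.bag t
          · exact ⟨t, by simp, hvb⟩
          · exact ⟨t', by simp, hkey v hv hvb⟩
      · -- minimality contradiction
        exfalso
        have hARw1 : AvoidReach tree t (nd w1) (nd w0) := hsplit t w1 hw1W w0 hw0W hw1t hw0b
        by_cases hD : AvoidReach tree t' t (nd w1)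
        · exact bridge_contradiction htr hadj hD.symm (hARw1.trans hARt'.symm)
        · have hsub : CS t' ⊆ CS t := by
            rintro s ⟨hsF, w, hwW, hwb', hARs⟩
            have hsw1 : AvoidReach tree t' s (nd w1) :=
              hARs.trans (hsplit t' w hwW w1 hw1W hwb' hw1b')
            obtain ⟨ws, hws⟩ := hsw1
            have hts : t ∉ ws.support := by
              intro hts
              exact hD ⟨ws.dropUntil t hts, fun hm => hws (ws.support_dropUntil_subset hts hm)⟩
            have h5 : AvoidReach tree t s (nd w1) := ⟨ws, hts⟩
            exact ⟨hsF, w0, hw0W, hw0b, h5.trans hARw1⟩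
          have ht'CS : t' ∈ CS t := ⟨ht'F, w0, hw0W, hw0b, hARt'⟩
          have ht'not : t' ∉ CS t' := by
            rintro ⟨-, w, -, -, hAR⟩
            exact hAR.ne_left rfl
          have hlt : muu t' < muu t :=
            Set.ncard_lt_ncard ⟨hsub, fun h => ht'not (h ht'CS)⟩ (hFfin.subset (hCSsub t))
          have := htmin t' ht'F
          omega
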